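/- Let T > 0 and let u ∈ H^1(0,T) be nonzero with u(0) + u(T) = 0. Then ∫₀ᵀ u'(t)² dt ≥ (4/T)·‖u‖_∞². -/

import Mathlib

open Set MeasureTheory intervalIntegral

theorem stmt4 (T : ℝ) (hT : 0 < T) (u u' : ℝ → ℝ) (M : ℝ)
    (hderiv : ∀ t ∈ Set.Icc (0:ℝ) T, HasDerivWithinAt u (u' t) (Set.Icc 0 T) t)
    (hint : IntervalIntegrable (fun t => (u' t) ^ 2) MeasureTheory.volume 0 T)
    (hant : u 0 + u T = 0)
    (hM : IsGreatest ((fun t => |u t|) '' Set.Icc 0 T) M)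
    (hne : ∃ t ∈ Set.Icc (0:ℝ) T, u t ≠ 0) :
    (4 / T) * M ^ 2 ≤ ∫ t in (0:ℝ)..T, (u' t) ^ 2 := by
  -- M > 0
  obtain ⟨t₀, ht₀, ht₀ne⟩ := hne
  have hMpos : 0 < M := lt_of_lt_of_le (abs_pos.2 ht₀ne) (hM.2 ⟨t₀, ht₀, rfl⟩)
  -- point where max is attained
  obtain ⟨s, hs, hsM⟩ := hM.1
  -- continuity
  have hcont : ContinuousOn u (Icc 0 T) := fun t ht => (hderiv t ht).continuousWithinAt
  -- u' equals derivWithin u (Ici ·) a.e. on Ioc 0 T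
  have hda : ∀ t ∈ Ioo (0:ℝ) T, HasDerivAt u (u' t) t := by
    intro t ht
    exact (hderiv t (Ioo_subset_Icc_self ht)).hasDerivAt (Icc_mem_nhds ht.1 ht.2)
  have hae : (fun t => derivWithin u (Ici t) t) =ᵐ[volume.restrict (Ioc 0 T)] u' := by
    have h1 : ∀ᵐ t ∂(volume.restrict (Ioc (0:ℝ) T)), t ∈ Ioc (0:ℝ) T :=
      ae_restrict_mem measurableSet_Ioc
    have h2 : ∀ᵐ t ∂(volume.restrict (Ioc (0:ℝ) T)), t ≠ T := by
      refine ae_restrict_of_ae ?_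
      simp [ae_iff]
    filter_upwards [h1, h2] with t ht htne
    have ht' : t ∈ Ioo (0:ℝ) T := ⟨ht.1, lt_of_le_of_ne ht.2 htne⟩
    exact ((hda t ht').hasDerivWithinAt).derivWithin (uniqueDiffOn_Ici t t Set.self_mem_Ici)
  have hmeas : AEStronglyMeasurable u' (volume.restrict (Ioc 0 T)) :=
    ((stronglyMeasurable_derivWithin_Ici u).aestronglyMeasurable).congr hae
  -- integrability of u'
  have hsqInt : IntegrableOn (fun t => (u' t)^2) (Ioc 0 T) volume :=
    (intervalIntegrable_iff_integrableOn_Ioc_of_le hT.le).1 hint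
  have hgInt : IntegrableOn (fun t => ((u' t)^2 + 1)/2) (Ioc 0 T) volume := by
    exact (hsqInt.add (integrableOn_const measure_Ioc_lt_top.ne)).div_const 2
  have hu'Int : IntegrableOn u' (Ioc 0 T) volume := by
    refine hgInt.integrable.mono' hmeas ?_
    refine Filter.Eventually.of_forall fun t => ?_
    have : (|u' t| - 1)^2 ≥ 0 := sq_nonneg _
    have h2 : |u' t|^2 = (u' t)^2 := sq_abs _
    rw [Real.norm_eq_abs]
    nlinarith [abs_nonneg (u' t)]
  have hu'int : IntervalIntegrable u' volume 0 T :=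
    (intervalIntegrable_iff_integrableOn_Ioc_of_le hT.le).2 hu'Int
  have habs : IntervalIntegrable (fun t => |u' t|) volume 0 T := hu'int.abs
  -- FTC on [0,s] and [s,T]
  have hsub1 : uIcc (0:ℝ) s ⊆ uIcc (0:ℝ) T := by
    rw [uIcc_of_le hs.1, uIcc_of_le hT.le]; exact Icc_subset_Icc le_rfl hs.2
  have hsub2 : uIcc s T ⊆ uIcc (0:ℝ) T := by
    rw [uIcc_of_le hs.2, uIcc_of_le hT.le]; exact Icc_subset_Icc hs.1 le_rfl
  have ftc1 : ∫ t in (0:ℝ)..s, u' t = u s - u 0 := by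
    refine integral_eq_sub_of_hasDeriv_right_of_le hs.1
      (hcont.mono (Icc_subset_Icc le_rfl hs.2)) (fun t ht => ?_) (hu'int.mono_set hsub1)
    exact (hda t ⟨ht.1, lt_of_lt_of_le ht.2 hs.2⟩).hasDerivWithinAt
  have ftc2 : ∫ t in s..T, u' t = u T - u s := by
    refine integral_eq_sub_of_hasDeriv_right_of_le hs.2
      (hcont.mono (Icc_subset_Icc hs.1 le_rfl)) (fun t ht => ?_) (hu'int.mono_set hsub2)
    exact (hda t ⟨lt_of_le_of_lt hs.1 ht.1, ht.2⟩).hasDerivWithinAt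
  -- 2M ≤ ∫ |u'|
  have key : 2 * M ≤ ∫ t in (0:ℝ)..T, |u' t| := by
    have hsplit : (∫ t in (0:ℝ)..s, |u' t|) + ∫ t in s..T, |u' t| =
        ∫ t in (0:ℝ)..T, |u' t| :=
      integral_add_adjacent_intervals (habs.mono_set hsub1) (habs.mono_set hsub2)
    have b1 : |∫ t in (0:ℝ)..s, u' t| ≤ ∫ t in (0:ℝ)..s, |u' t| :=
      abs_integral_le_integral_abs hs.1
    have b2 : |∫ t in s..T, u' t| ≤ ∫ t in s..T, |u' t| :=
      abs_integral_le_integral_abs hs.2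
    rw [ftc1] at b1; rw [ftc2] at b2
    have h2us : 2 * M = |u s - u 0 - (u T - u s)| := by
      have : u s - u 0 - (u T - u s) = 2 * u s - (u 0 + u T) := by ring
      rw [this, hant, sub_zero, abs_mul, ← hsM]
      norm_num
    calc 2 * M ≤ |u s - u 0| + |u T - u s| := by
          rw [h2us]; exact (abs_sub _ _)
      _ ≤ (∫ t in (0:ℝ)..s, |u' t|) + ∫ t in s..T, |u' t| := add_le_add b1 b2
      _ = _ := hsplit
  -- set I and get bound for each c > 0
  set I := ∫ t in (0:ℝ)..T, (u' t)^2 with hI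
  have hbound : ∀ c : ℝ, 0 < c → 4 * M ≤ c * I + T / c := by
    intro c hc
    have hmono : (∫ t in (0:ℝ)..T, 2 * |u' t|) ≤
        ∫ t in (0:ℝ)..T, (c * (u' t)^2 + 1/c) := by
      refine integral_mono_on hT.le (habs.const_mul 2)
        ((hint.const_mul c).add intervalIntegrable_const) (fun t _ => ?_)
      rw [← mul_le_mul_iff_right₀ hc]
      have hx : c * (c * (u' t)^2 + 1/c) = c^2 * (u' t)^2 + 1 := by
        field_simp
      rw [hx]
      nlinarith [sq_nonneg (c * |u' t| - 1), sq_abs (u' t)]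
    rw [intervalIntegral.integral_const_mul] at hmono
    rw [intervalIntegral.integral_add (hint.const_mul c) intervalIntegrable_const,
      intervalIntegral.integral_const_mul, intervalIntegral.integral_const] at hmono
    have : 4 * M ≤ 2 * ∫ t in (0:ℝ)..T, |u' t| := by linarith
    calc 4 * M ≤ 2 * ∫ t in (0:ℝ)..T, |u' t| := this
      _ ≤ c * I + (T - 0) • (1/c) := hmono
      _ = c * I + T / c := by simp [smul_eq_mul, div_eq_mul_inv]
  -- choose c = T / (2M)
  have hc : (0:ℝ) < T / (2 * M) := div_pos hT (by linarith)
  have hkey := hbound _ hc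
  have hIT : 4 * M^2 ≤ T * I := by
    have hTd : T / (T / (2 * M)) = 2 * M := by
      field_simp
    rw [hTd] at hkey
    have : 2 * M ≤ T / (2 * M) * I := by linarith
    calc 4 * M^2 = (2 * M) * (2 * M) := by ring
      _ ≤ (T / (2 * M) * I) * (2 * M) := by
          apply mul_le_mul_of_nonneg_right this (by linarith)
      _ = T * I := by field_simp
  rw [div_mul_eq_mul_div, div_le_iff₀ hT]
  linarith
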